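/- In a Ferromagnetic Potts Model, for fixed node marginals μ_u (probability vectors), the minimum over locally consistent edge marginals μ_e of Σ_{i≠j} μ_e(ij) equals (1/2)‖μ_u − μ_v‖₁; it is attained by setting μ_e(ii) = min(μ_u(i), μ_v(i)). Hence the local-polytope relaxation of MAP inference in a Ferromagnetic Potts Model equals the LP relaxation with edge term w(u,v)·(1/2)‖μ_u − μ_v‖₁. -/

import Mathlib

open Finset

variable {V L : Type*}

/-- `x` is a probability vector over the labels `L`. -/
def IsProbVec [Fintype L] (x : L → ℝ) : Prop :=
  (∀ i, 0 ≤ x i) ∧ ∑ i, x i = 1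

/-- Half the ℓ₁ distance between two label vectors. -/
noncomputable def dL1 [Fintype L] (x y : L → ℝ) : ℝ :=
  (1 / 2) * ∑ i, |x i - y i|

/-- The LP relaxation objective of Uniform Metric Labeling. -/
noncomputable def QLP [Fintype V] [Fintype L] (E : Finset (V × V))
    (c : V → L → ℝ) (w : V × V → ℝ) (μ : V → L → ℝ) : ℝ :=
  ∑ u, ∑ i, c u i * μ u i + ∑ e ∈ E, w e * dL1 (μ e.1) (μ e.2)

/-- The Uniform Metric Labeling objective. -/
def Q [Fintype V] [DecidableEq L] (E : Finset (V × V)) (c : V → L → ℝ)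
    (w : V × V → ℝ) (g : V → L) : ℝ :=
  ∑ u, c u (g u) + ∑ e ∈ E.filter (fun e => g e.1 ≠ g e.2), w e

/-- The integer LP solution corresponding to a labeling `f`. -/
def toVec [DecidableEq L] (f : V → L) : V → L → ℝ :=
  fun u i => if f u = i then 1 else 0

lemma offdiag_eq {L : Type*} [Fintype L] [DecidableEq L] (μe : L → L → ℝ) :
    ∑ i, ∑ j, (if i = j then (0:ℝ) else μe i j) = ∑ i, ((∑ j, μe i j) - μe i i) := by
  refine Finset.sum_congr rfl fun i _ => ?_
  have h : ∀ j, (if i = j then (0:ℝ) else μe i j) = μe i j - (if i = j then μe i j else 0) := by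
    intro j; split <;> simp [*]
  rw [Finset.sum_congr rfl fun j _ => h j, Finset.sum_sub_distrib, Finset.sum_ite_eq]
  simp

lemma half_l1_eq {L : Type*} [Fintype L] (x y : L → ℝ)
    (hx : ∑ i, x i = 1) (hy : ∑ i, y i = 1) :
    ∑ i, (x i - min (x i) (y i)) = dL1 x y := by
  have h : ∀ i, x i - min (x i) (y i) = (x i - y i)/2 + |x i - y i|/2 := by
    intro i
    rcases le_total (x i) (y i) with h | h
    · rw [min_eq_left h, abs_of_nonpos (by linarith)]; ring
    · rw [min_eq_right h, abs_of_nonneg (by linarith)]; ring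
  rw [Finset.sum_congr rfl fun i _ => h i, Finset.sum_add_distrib,
    ← Finset.sum_div, ← Finset.sum_div, Finset.sum_sub_distrib, hx, hy, dL1]
  ring

lemma lower_bound {L : Type*} [Fintype L] [DecidableEq L] (x y : L → ℝ)
    (hx : IsProbVec x) (hy : IsProbVec y) (μe : L → L → ℝ)
    (h0 : ∀ i j, 0 ≤ μe i j) (h1 : ∀ i, ∑ j, μe i j = x i) (h2 : ∀ j, ∑ i, μe i j = y j) :
    dL1 x y ≤ ∑ i, ∑ j, (if i = j then (0:ℝ) else μe i j) := by
  rw [offdiag_eq, ← half_l1_eq x y hx.2 hy.2]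
  refine Finset.sum_le_sum fun i _ => ?_
  have hxi : μe i i ≤ x i := by
    rw [← h1 i]; exact Finset.single_le_sum (fun j _ => h0 i j) (Finset.mem_univ i)
  have hyi : μe i i ≤ y i := by
    rw [← h2 i]; exact Finset.single_le_sum (fun j _ => h0 j i) (Finset.mem_univ i)
  rw [h1 i]
  have := le_min hxi hyi
  linarith

lemma exists_good {L : Type*} [Fintype L] [DecidableEq L] (x y : L → ℝ)
    (hx : IsProbVec x) (hy : IsProbVec y) :
    ∃ μe : L → L → ℝ,
      (∀ i j, 0 ≤ μe i j) ∧ (∀ i, ∑ j, μe i j = x i) ∧ (∀ j, ∑ i, μe i j = y j) ∧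
      (∀ i, μe i i = min (x i) (y i)) ∧
      ∑ i, ∑ j, (if i = j then (0:ℝ) else μe i j) = dL1 x y := by
  set a : L → ℝ := fun i => x i - min (x i) (y i) with ha
  set b : L → ℝ := fun i => y i - min (x i) (y i) with hb
  set S : ℝ := ∑ i, a i with hS
  have ha0 : ∀ i, 0 ≤ a i := fun i => sub_nonneg.2 (min_le_left _ _)
  have hb0 : ∀ i, 0 ≤ b i := fun i => sub_nonneg.2 (min_le_right _ _)
  have hab : ∀ i, a i * b i = 0 := by
    intro i
    rcases le_total (x i) (y i) with h | h
    · have : a i = 0 := by simp [ha, min_eq_left h]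
      rw [this, zero_mul]
    · have : b i = 0 := by simp [hb, min_eq_right h]
      rw [this, mul_zero]
  have hSb : ∑ i, b i = S := by
    have hd : ∑ i, b i - ∑ i, a i = 0 := by
      rw [← Finset.sum_sub_distrib]
      have h : ∀ i, b i - a i = y i - x i := fun i => by simp [ha, hb]
      rw [Finset.sum_congr rfl fun i _ => h i, Finset.sum_sub_distrib, hy.2, hx.2]; ring
    linarith
  have hSval : S = dL1 x y := half_l1_eq x y hx.2 hy.2
  have hS0 : 0 ≤ S := Finset.sum_nonneg fun i _ => ha0 i
  have hmin0 : ∀ i, 0 ≤ min (x i) (y i) := fun i => le_min (hx.1 i) (hy.1 i)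
  have haS : ∀ i, a i * S / S = a i := by
    intro i
    by_cases h : S = 0
    · have : ∀ j ∈ Finset.univ, a j = 0 :=
        (Finset.sum_eq_zero_iff_of_nonneg (fun j _ => ha0 j)).1 (hS ▸ h.symm ▸ rfl)
      rw [this i (Finset.mem_univ i), h]; simp
    · rw [mul_div_assoc, div_self h, mul_one]
  have hbS : ∀ j, S * b j / S = b j := by
    intro j
    by_cases h : S = 0
    · have : ∀ i ∈ Finset.univ, b i = 0 :=
        (Finset.sum_eq_zero_iff_of_nonneg (fun i _ => hb0 i)).1 (hSb.trans h)
      rw [this j (Finset.mem_univ j), h]; simp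
    · rw [mul_comm, mul_div_assoc, div_self h, mul_one]
  refine ⟨fun i j => (if i = j then min (x i) (y i) else 0) + a i * b j / S, ?_, ?_, ?_, ?_, ?_⟩
  · intro i j
    have h1 : 0 ≤ a i * b j / S := div_nonneg (mul_nonneg (ha0 i) (hb0 j)) hS0
    have h2 : (0:ℝ) ≤ (if i = j then min (x i) (y i) else 0) := by
      split
      · exact hmin0 i
      · exact le_refl _
    exact add_nonneg h2 h1
  · intro i
    show ∑ j, ((if i = j then min (x i) (y i) else 0) + a i * b j / S) = x i
    rw [Finset.sum_add_distrib, Finset.sum_ite_eq]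
    have : ∑ j, a i * b j / S = a i * S / S := by
      rw [← Finset.sum_div, ← Finset.mul_sum, hSb]
    rw [this, haS i]
    simp [ha]
  · intro j
    show ∑ i, ((if i = j then min (x i) (y i) else 0) + a i * b j / S) = y j
    have hcol : ∀ i, (if i = j then min (x i) (y i) else 0) = (if j = i then min (x j) (y j) else 0) := by
      intro i
      by_cases h : i = j
      · subst h; simp
      · rw [if_neg h, if_neg (Ne.symm h)]
    rw [Finset.sum_add_distrib, Finset.sum_congr rfl fun i _ => by rw [hcol i]]
    rw [Finset.sum_ite_eq]
    have : ∑ i, a i * b j / S = S * b j / S := by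
      rw [← Finset.sum_div, ← Finset.sum_mul]
    rw [this, hbS j]
    simp [hb]
  · intro i
    show (if i = i then min (x i) (y i) else 0) + a i * b i / S = min (x i) (y i)
    rw [if_pos rfl, hab i]; simp
  · show ∑ i, ∑ j, (if i = j then (0:ℝ) else (if i = j then min (x i) (y i) else 0) + a i * b j / S) = dL1 x y
    rw [offdiag_eq]
    have hdiag : ∀ i, ((if i = i then min (x i) (y i) else 0) + a i * b i / S) = min (x i) (y i) := by
      intro i; rw [if_pos rfl, hab i]; simp
    have hrow : ∀ i, ∑ j, ((if i = j then min (x i) (y i) else 0) + a i * b j / S) = x i := by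
      intro i
      rw [Finset.sum_add_distrib, Finset.sum_ite_eq]
      have : ∑ j, a i * b j / S = a i * S / S := by
        rw [← Finset.sum_div, ← Finset.mul_sum, hSb]
      rw [this, haS i]
      simp [ha]
    rw [Finset.sum_congr rfl fun i _ => by rw [hrow i, hdiag i], ← hSval, hS]

lemma csInf_eq_csInf_of {A B : Set ℝ} (hBA : B ⊆ A) (hdom : ∀ t ∈ A, ∃ s ∈ B, s ≤ t)
    (hbdd : BddBelow A) : sInf A = sInf B := by
  by_cases hB : B.Nonempty
  · refine le_antisymm (csInf_le_csInf hbdd hB hBA) ?_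
    rcases hB with ⟨b, hb⟩
    have hA : A.Nonempty := ⟨b, hBA hb⟩
    refine le_csInf hA fun t ht => ?_
    obtain ⟨s, hsB, hst⟩ := hdom t ht
    exact le_trans (csInf_le (hbdd.mono hBA) hsB) hst
  · have hA : A = ∅ := by
      rw [Set.eq_empty_iff_forall_notMem]
      intro t ht
      obtain ⟨s, hsB, _⟩ := hdom t ht
      exact hB ⟨s, hsB⟩
    rw [hA, Set.not_nonempty_iff_eq_empty.mp hB]

/-- In a Ferromagnetic Potts Model, for fixed node marginals the minimum over
locally consistent edge marginals of the off-diagonal mass is half the ℓ₁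
distance, attained by putting `min(μ_u(i), μ_v(i))` on the diagonal; hence the
local-polytope relaxation coincides with the LP relaxation `QLP`. -/
theorem local_polytope_eq_lp {V L : Type*} [Fintype V] [Fintype L] [DecidableEq L]
    (E : Finset (V × V)) (c : V → L → ℝ) (w : V × V → ℝ)
    (hw : ∀ e ∈ E, 0 ≤ w e) :
    (∀ x y : L → ℝ, IsProbVec x → IsProbVec y →
      (IsLeast {t : ℝ | ∃ μe : L → L → ℝ,
          (∀ i j, 0 ≤ μe i j) ∧
          (∀ i, ∑ j, μe i j = x i) ∧
          (∀ j, ∑ i, μe i j = y j) ∧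
          t = ∑ i, ∑ j, if i = j then (0 : ℝ) else μe i j}
        (dL1 x y)) ∧
      (∃ μe : L → L → ℝ,
          (∀ i j, 0 ≤ μe i j) ∧
          (∀ i, ∑ j, μe i j = x i) ∧
          (∀ j, ∑ i, μe i j = y j) ∧
          (∀ i, μe i i = min (x i) (y i)) ∧
          ∑ i, ∑ j, (if i = j then (0 : ℝ) else μe i j) = dL1 x y)) ∧
    sInf {t : ℝ | ∃ μ : V → L → ℝ, ∃ μe : V × V → L → L → ℝ,
        (∀ u, IsProbVec (μ u)) ∧
        (∀ e ∈ E, ∀ i j, 0 ≤ μe e i j) ∧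
        (∀ e ∈ E, ∀ i, ∑ j, μe e i j = μ e.1 i) ∧
        (∀ e ∈ E, ∀ j, ∑ i, μe e i j = μ e.2 j) ∧
        t = ∑ u, ∑ i, c u i * μ u i +
            ∑ e ∈ E, w e * ∑ i, ∑ j, (if i = j then (0 : ℝ) else μe e i j)} =
      sInf {t : ℝ | ∃ μ : V → L → ℝ, (∀ u, IsProbVec (μ u)) ∧ t = QLP E c w μ} := by
  constructor
  · intro x y hx hy
    obtain ⟨μe, h0, h1, h2, hdiag, hval⟩ := exists_good x y hx hy
    refine ⟨⟨⟨μe, h0, h1, h2, hval.symm⟩, ?_⟩, ⟨μe, h0, h1, h2, hdiag, hval⟩⟩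
    rintro t ⟨ν, n0, n1, n2, rfl⟩
    exact lower_bound x y hx hy ν n0 n1 n2
  · refine csInf_eq_csInf_of ?_ ?_ ?_
    · rintro t ⟨μ, hμ, rfl⟩
      choose ν hν0 hν1 hν2 hνd hνval using
        fun e : V × V => exists_good (μ e.1) (μ e.2) (hμ e.1) (hμ e.2)
      refine ⟨μ, ν, hμ, fun e _ => hν0 e, fun e _ => hν1 e, fun e _ => hν2 e, ?_⟩
      unfold QLP
      congr 1
      exact Finset.sum_congr rfl fun e _ => by rw [hνval e]
    · rintro t ⟨μ, ν, hμ, h0, h1, h2, rfl⟩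
      refine ⟨QLP E c w μ, ⟨μ, hμ, rfl⟩, ?_⟩
      unfold QLP
      refine add_le_add_right (Finset.sum_le_sum fun e he =>
          mul_le_mul_of_nonneg_left
            (lower_bound (μ e.1) (μ e.2) (hμ e.1) (hμ e.2) (ν e) (h0 e he) (h1 e he) (h2 e he))
            (hw e he)) _
    · refine ⟨-(∑ u, ∑ i, |c u i|), ?_⟩
      rintro t ⟨μ, ν, hμ, h0, _, _, rfl⟩
      have hnode : -(∑ u, ∑ i, |c u i|) ≤ ∑ u, ∑ i, c u i * μ u i := by
        rw [← Finset.sum_neg_distrib]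
        refine Finset.sum_le_sum fun u _ => ?_
        rw [← Finset.sum_neg_distrib]
        refine Finset.sum_le_sum fun i _ => ?_
        have hle1 : μ u i ≤ 1 := by
          rw [← (hμ u).2]
          exact Finset.single_le_sum (fun j _ => (hμ u).1 j) (Finset.mem_univ i)
        have h1 : -(|c u i|) ≤ -(|c u i| * μ u i) := by
          have : |c u i| * μ u i ≤ |c u i| * 1 :=
            mul_le_mul_of_nonneg_left hle1 (abs_nonneg _)
          linarith
        have h2 : -(|c u i| * μ u i) ≤ c u i * μ u i := by
          have := neg_abs_le (c u i)
          nlinarith [(hμ u).1 i]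
        linarith
      have hedge : 0 ≤ ∑ e ∈ E, w e * ∑ i, ∑ j, (if i = j then (0:ℝ) else ν e i j) := by
        refine Finset.sum_nonneg fun e he => mul_nonneg (hw e he) ?_
        refine Finset.sum_nonneg fun i _ => Finset.sum_nonneg fun j _ => ?_
        split
        · exact le_refl _
        · exact h0 e he i _
      linarith
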